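/- Let G = G₀ *_H G₁ be a nondegenerate free product with amalgamation and assume that H is finite. Then FC(G) = ker G, i.e., the set of elements of G with finite conjugacy class coincides with ⋂_{g ∈ G} gHg⁻¹. -/

import Mathlib

variable {G : Type*} [Group G]

/-- `AltWord G₀ G₁ H j w`: the list `w` is an alternating word whose `i`-th letter lies in
`G_{(i+j) mod 2} \ H`. -/
def AltWord (G₀ G₁ H : Subgroup G) (j : ℕ) (w : List G) : Prop :=
  ∀ (i : ℕ) (hi : i < w.length),
    w.get ⟨i, hi⟩ ∈ (if (i + j) % 2 = 0 then (G₀ : Set G) else (G₁ : Set G)) \ (H : Set G)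

/-- `G` is the free product of its subgroups `G₀` and `G₁` amalgamated over their common
subgroup `H` (internal characterization: `G₀ ∩ G₁ = H`, the subgroups `G₀` and `G₁` generate
`G`, and no nonempty alternating word with letters in `G₀ \ H` and `G₁ \ H` has product
in `H`). -/
structure IsAmalgam (G₀ G₁ H : Subgroup G) : Prop where
  le_left : H ≤ G₀
  le_right : H ≤ G₁
  inf_eq : G₀ ⊓ G₁ = H
  closure_eq_top : Subgroup.closure ((G₀ : Set G) ∪ (G₁ : Set G)) = ⊤
  reduced : ∀ (j : ℕ) (w : List G), w ≠ [] → AltWord G₀ G₁ H j w → w.prod ∉ H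

/-- The amalgam `G₀ *_H G₁` is *nondegenerate*: `([G₀ : H] − 1) · ([G₁ : H] − 1) ≥ 2`,
i.e. `H` is a proper subgroup of both `G₀` and `G₁`, and has index at least `3` (possibly
infinite) in at least one of them. -/
def Nondegenerate (G₀ G₁ H : Subgroup G) : Prop :=
  H.relIndex G₀ ≠ 1 ∧ H.relIndex G₁ ≠ 1 ∧ ¬(H.relIndex G₀ = 2 ∧ H.relIndex G₁ = 2)

/-- `T_{j,k}`: the set of elements of `G` that are products of alternating words of length
`k` whose first letter lies in `G_j \ H`; by convention `T_{j,0} = H`. -/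
def TT (G₀ G₁ H : Subgroup G) (j k : ℕ) : Set G :=
  if k = 0 then (H : Set G)
  else {g | ∃ w : List G, w.length = k ∧ AltWord G₀ G₁ H j w ∧ w.prod = g}

/-- `C_{j,k} = ⋂_{g ∈ T_{j,k}} g H g⁻¹`. -/
def CC (G₀ G₁ H : Subgroup G) (j k : ℕ) : Set G :=
  ⋂ g ∈ TT G₀ G₁ H j k, {x | g⁻¹ * x * g ∈ H}

/-- `K_j = ⋂_{k ≥ 0} C_{j,k}`. -/
def KK (G₀ G₁ H : Subgroup G) (j : ℕ) : Set G :=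
  ⋂ k : ℕ, CC G₀ G₁ H j k

/-- The kernel of the amalgam, `ker G = ⋂_{g ∈ G} g H g⁻¹`, as a set. -/
def amalgamKerSet (H : Subgroup G) : Set G :=
  ⋂ g : G, {x | g⁻¹ * x * g ∈ H}

namespace FCAux

variable (G₀ G₁ H : Subgroup G)

def Fac (j : ℕ) : Set G := if j % 2 = 0 then (G₀ : Set G) else (G₁ : Set G)

theorem fac_congr {j j' : ℕ} (h : j % 2 = j' % 2) : Fac G₀ G₁ j = Fac G₀ G₁ j' := by
  unfold Fac; rw [h]

theorem fac_add_two (j : ℕ) : Fac G₀ G₁ (j + 2) = Fac G₀ G₁ j :=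
  fac_congr _ _ (by omega)

theorem altWord_iff (j : ℕ) (w : List G) :
    AltWord G₀ G₁ H j w ↔ ∀ (i : ℕ) (hi : i < w.length),
      w.get ⟨i, hi⟩ ∈ Fac G₀ G₁ (i + j) \ (H : Set G) := Iff.rfl

theorem altWord_nil (j : ℕ) : AltWord G₀ G₁ H j [] := by
  intro i hi; simp at hi

theorem altWord_cons {j : ℕ} {a : G} {w : List G} :
    AltWord G₀ G₁ H j (a :: w) ↔
      a ∈ Fac G₀ G₁ j \ (H : Set G) ∧ AltWord G₀ G₁ H (j + 1) w := by
  rw [altWord_iff, altWord_iff]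
  constructor
  · intro h
    refine ⟨by simpa using h 0 (by simp), fun i hi => ?_⟩
    have := h (i + 1) (by simpa using Nat.succ_lt_succ hi)
    rw [show i + 1 + j = i + (j + 1) by omega] at this
    simpa using this
  · rintro ⟨ha, hw⟩ i hi
    match i with
    | 0 => simpa using ha
    | (i + 1) =>
      have := hw i (by simpa using Nat.lt_of_succ_lt_succ hi)
      rw [show i + (j + 1) = i + 1 + j by omega] at this
      simpa using this

theorem altWord_congr {j j' : ℕ} (h : j % 2 = j' % 2) {w : List G} :
    AltWord G₀ G₁ H j w → AltWord G₀ G₁ H j' w := by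
  intro hw i hi
  have := hw i hi
  rwa [show (if (i + j) % 2 = 0 then (G₀ : Set G) else (G₁ : Set G)) =
      if (i + j') % 2 = 0 then (G₀ : Set G) else (G₁ : Set G) by
    rw [Nat.add_mod i j, Nat.add_mod i j', h]] at this

theorem altWord_append {j : ℕ} {u v : List G}
    (hu : AltWord G₀ G₁ H j u) (hv : AltWord G₀ G₁ H (j + u.length) v) :
    AltWord G₀ G₁ H j (u ++ v) := by
  induction u generalizing j with
  | nil => simpa using hv
  | cons a u ih =>
    rw [List.cons_append, altWord_cons]
    rw [altWord_cons] at hu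
    refine ⟨hu.1, ih hu.2 ?_⟩
    rwa [show j + 1 + u.length = j + (a :: u).length by simp; omega]

theorem altWord_singleton {j : ℕ} {a : G} (h : a ∈ Fac G₀ G₁ j \ (H : Set G)) :
    AltWord G₀ G₁ H j [a] :=
  (altWord_cons _ _ _).2 ⟨h, altWord_nil _ _ _ _⟩

theorem altWord_concat_iff {j : ℕ} {u : List G} {a : G} :
    AltWord G₀ G₁ H j (u ++ [a]) ↔
      AltWord G₀ G₁ H j u ∧ a ∈ Fac G₀ G₁ (j + u.length) \ (H : Set G) := by
  induction u generalizing j with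
  | nil => simp [altWord_cons, altWord_nil]
  | cons b u ih =>
    rw [List.cons_append, altWord_cons, altWord_cons, ih, and_assoc]
    constructor
    · rintro ⟨h1, h2, h3⟩
      exact ⟨h1, h2, by rwa [show j + (b :: u).length = j + 1 + u.length by simp; omega]⟩
    · rintro ⟨h1, h2, h3⟩
      exact ⟨h1, h2, by rwa [show j + 1 + u.length = j + (b :: u).length by simp; omega]⟩




variable {G₀ G₁ H}

theorem h_mem_fac (ha : IsAmalgam G₀ G₁ H) {j : ℕ} {h : G} (hh : h ∈ (H : Set G)) :
    h ∈ Fac G₀ G₁ j := by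
  unfold Fac; split
  · exact ha.le_left hh
  · exact ha.le_right hh

theorem fac_mul {j : ℕ} {a b : G} (hb : a ∈ Fac G₀ G₁ j) (hc : b ∈ Fac G₀ G₁ j) :
    a * b ∈ Fac G₀ G₁ j := by
  unfold Fac at *; split at hb <;> simp_all <;> exact mul_mem hb hc

theorem fac_inv {j : ℕ} {a : G} (hb : a ∈ Fac G₀ G₁ j) : a⁻¹ ∈ Fac G₀ G₁ j := by
  unfold Fac at *; split at hb <;> simp_all

theorem altWord_reverse_inv {j : ℕ} {w : List G} (hw : AltWord G₀ G₁ H j w) :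
    AltWord G₀ G₁ H (j + w.length + 1) ((w.map fun x => x⁻¹).reverse) := by
  induction w generalizing j with
  | nil => exact altWord_nil _ _ _ _
  | cons a w ih =>
    rw [altWord_cons] at hw
    have h1 := ih hw.2
    rw [List.map_cons, List.reverse_cons]
    rw [show j + (a :: w).length + 1 = (j + 1) + w.length + 1 by simp; omega]
    refine (altWord_concat_iff _ _ _).2 ⟨h1, ?_, fun hmem => hw.1.2 (by simpa using inv_mem (s := H) hmem)⟩
    rw [List.length_reverse, List.length_map,
      fac_congr G₀ G₁ (j := j + 1 + w.length + 1 + w.length) (j' := j) (by omega)]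
    exact fac_inv hw.1.1

theorem step (ha : IsAmalgam G₀ G₁ H) {j : ℕ} {w : List G} (hw : AltWord G₀ G₁ H j w)
    {m : ℕ} {x : G} (hx : x ∈ Fac G₀ G₁ m) :
    ∃ (j' : ℕ) (w' : List G) (h : G), AltWord G₀ G₁ H j' w' ∧ h ∈ (H : Set G) ∧
      w'.prod * h = w.prod * x ∧ w.length ≤ w'.length + 1 := by
  rcases List.eq_nil_or_concat w with rfl | ⟨u, y, rfl⟩
  · by_cases hxH : x ∈ (H : Set G)
    · exact ⟨j, [], x, altWord_nil _ _ _ _, hxH, by simp, by simp⟩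
    · exact ⟨m, [x], 1, altWord_singleton _ _ _ ⟨hx, hxH⟩, one_mem H, by simp, by simp⟩
  · rw [List.concat_eq_append] at hw ⊢
    obtain ⟨hu, hy⟩ := (altWord_concat_iff _ _ _).1 hw
    by_cases hpar : (j + u.length) % 2 = m % 2
    · have hx' : x ∈ Fac G₀ G₁ (j + u.length) := by
        rwa [fac_congr G₀ G₁ hpar]
      have hyx : y * x ∈ Fac G₀ G₁ (j + u.length) := fac_mul hy.1 hx'
      by_cases hmem : y * x ∈ (H : Set G)
      · exact ⟨j, u, y * x, hu, hmem, by rw [List.prod_append]; simp [mul_assoc], by simp⟩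
      · refine ⟨j, u ++ [y * x], 1, (altWord_concat_iff _ _ _).2 ⟨hu, hyx, hmem⟩, one_mem H,
          ?_, by simp⟩
        rw [List.prod_append, List.prod_append]; simp [mul_assoc]
    · by_cases hxH : x ∈ (H : Set G)
      · exact ⟨j, u ++ [y], x, hw, hxH, rfl, Nat.le_succ _⟩
      · refine ⟨j, (u ++ [y]) ++ [x], 1, ?_, one_mem H, by rw [List.prod_append]; simp, by simp⟩
        refine (altWord_concat_iff _ _ _).2 ⟨hw, ?_, hxH⟩
        rw [List.length_append, List.length_singleton,
          fac_congr G₀ G₁ (j := j + (u.length + 1)) (j' := m) (by omega)]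
        exact hx

theorem mulWord (ha : IsAmalgam G₀ G₁ H) :
    ∀ (n : ℕ) (v : List G), v.length = n → ∀ {j₂ : ℕ}, AltWord G₀ G₁ H j₂ v →
    ∀ {j : ℕ} (u : List G), AltWord G₀ G₁ H j u →
    ∃ (j' : ℕ) (w : List G) (h : G), AltWord G₀ G₁ H j' w ∧ h ∈ (H : Set G) ∧
      w.prod * h = u.prod * v.prod ∧ u.length ≤ w.length + v.length := by
  intro n
  induction n with
  | zero =>
    intro v hv j₂ _ j u hu
    rw [List.length_eq_zero_iff] at hv; subst hv
    exact ⟨j, u, 1, hu, one_mem H, by simp, by simp⟩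
  | succ n ih =>
    intro v hv j₂ hvAlt j u hu
    match v, hv with
    | a :: v', hv =>
      rw [altWord_cons] at hvAlt
      obtain ⟨j₁, w₁, h₁, hw₁Alt, hh₁, hprod₁, hlen₁⟩ := step ha hu hvAlt.1.1
      match v' with
      | [] =>
        refine ⟨j₁, w₁, h₁, hw₁Alt, hh₁, by simpa using hprod₁, by simpa using hlen₁⟩
      | b :: rest =>
        have hbrest := hvAlt.2
        rw [altWord_cons] at hbrest
        have hv'' : AltWord G₀ G₁ H (j₂ + 1) ((h₁ * b) :: rest) := by
          rw [altWord_cons]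
          refine ⟨⟨fac_mul (h_mem_fac ha hh₁) hbrest.1.1, fun hmem => hbrest.1.2 ?_⟩, hbrest.2⟩
          have : h₁⁻¹ * (h₁ * b) ∈ (H : Set G) := mul_mem (inv_mem hh₁) hmem
          simpa [mul_assoc] using this
        have hlen'' : ((h₁ * b) :: rest).length = n := by simpa using Nat.succ_injective hv
        obtain ⟨j', w, h, hwAlt, hh, hprod, hlen⟩ := ih _ hlen'' hv'' w₁ hw₁Alt
        refine ⟨j', w, h, hwAlt, hh, ?_, ?_⟩
        · rw [hprod]
          simp only [List.prod_cons, ← mul_assoc, hprod₁]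
        · have h2 : rest.length + 1 = n := by simpa using hlen''
          have h3 : w₁.length ≤ w.length + n := by
            rw [← h2]; simpa using hlen
          simp only [List.length_cons]
          omega

theorem length_le_of_prod_eq (ha : IsAmalgam G₀ G₁ H) {j j₂ : ℕ} {u v : List G}
    (hu : AltWord G₀ G₁ H j u) (hv : AltWord G₀ G₁ H j₂ v) (h : u.prod = v.prod) :
    u.length ≤ v.length := by
  obtain ⟨j', w, hh, hwAlt, hhH, hprod, hlen⟩ :=
    mulWord ha _ _ rfl (altWord_reverse_inv hv) u hu
  have hvp : ((v.map fun x => x⁻¹).reverse).prod = v.prod⁻¹ := (List.prod_inv_reverse v).symm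
  rw [hvp, h, mul_inv_cancel] at hprod
  have hw0 : w = [] := by
    by_contra hne
    exact ha.reduced j' w hne hwAlt (by
      have hwp : w.prod = hh⁻¹ := eq_inv_of_mul_eq_one_left hprod
      rw [hwp]; exact inv_mem hhH)
  subst hw0
  simpa using hlen

theorem length_eq_of_prod_eq (ha : IsAmalgam G₀ G₁ H) {j j₂ : ℕ} {u v : List G}
    (hu : AltWord G₀ G₁ H j u) (hv : AltWord G₀ G₁ H j₂ v) (h : u.prod = v.prod) :
    u.length = v.length :=
  le_antisymm (length_le_of_prod_eq ha hu hv h) (length_le_of_prod_eq ha hv hu h.symm)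



def FacS (G₀ G₁ : Subgroup G) (j : ℕ) : Subgroup G := if j % 2 = 0 then G₀ else G₁

theorem facS_coe (G₀ G₁ : Subgroup G) (j : ℕ) : ((FacS G₀ G₁ j : Subgroup G) : Set G) = Fac G₀ G₁ j := by
  unfold FacS Fac; split_ifs <;> rfl

theorem facS_congr (G₀ G₁ : Subgroup G) {j j' : ℕ} (h : j % 2 = j' % 2) : FacS G₀ G₁ j = FacS G₀ G₁ j' := by
  unfold FacS; rw [h]

theorem absorb_right (ha : IsAmalgam G₀ G₁ H) {j : ℕ} {w : List G} (hne : w ≠ [])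
    (hAlt : AltWord G₀ G₁ H j w) {h : G} (hh : h ∈ (H : Set G)) :
    ∃ w', w' ≠ [] ∧ AltWord G₀ G₁ H j w' ∧ w'.prod = w.prod * h ∧ w'.length = w.length := by
  rcases List.eq_nil_or_concat w with rfl | ⟨u, y, rfl⟩
  · exact absurd rfl hne
  · rw [List.concat_eq_append] at hAlt ⊢
    obtain ⟨hu, hy⟩ := (altWord_concat_iff _ _ _).1 hAlt
    refine ⟨u ++ [y * h], by simp, (altWord_concat_iff _ _ _).2
      ⟨hu, fac_mul hy.1 (h_mem_fac ha hh), fun hmem => hy.2 ?_⟩,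
      by rw [List.prod_append, List.prod_append]; simp [mul_assoc], by simp⟩
    have : (y * h) * h⁻¹ ∈ (H : Set G) := mul_mem hmem (inv_mem hh)
    simpa [mul_assoc] using this

theorem exists_rep (ha : IsAmalgam G₀ G₁ H) (g : G) :
    g ∈ (H : Set G) ∨ ∃ j w, w ≠ [] ∧ AltWord G₀ G₁ H j w ∧ w.prod = g := by
  have hg : g ∈ Subgroup.closure ((G₀ : Set G) ∪ (G₁ : Set G)) := by
    rw [ha.closure_eq_top]; trivial
  induction hg using Subgroup.closure_induction with
  | mem x hx =>
    by_cases hH : x ∈ (H : Set G)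
    · exact Or.inl hH
    · rcases hx with h0 | h1
      · exact Or.inr ⟨0, [x], by simp, altWord_singleton _ _ _ ⟨by simp [Fac, h0], hH⟩, by simp⟩
      · exact Or.inr ⟨1, [x], by simp, altWord_singleton _ _ _ ⟨by simp [Fac, h1], hH⟩, by simp⟩
  | one => exact Or.inl (one_mem H)
  | mul x y hx hy px py =>
    rcases px with hx' | ⟨j, w, hne, hAlt, hprod⟩
    · rcases py with hy' | ⟨j, w, hne, hAlt, hprod⟩
      · exact Or.inl (mul_mem hx' hy')
      · match w, hne with
        | a :: t, _ =>
          rw [altWord_cons] at hAlt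
          refine Or.inr ⟨j, (x * a) :: t, by simp, (altWord_cons _ _ _).2
            ⟨⟨fac_mul (h_mem_fac ha hx') hAlt.1.1, fun hmem => hAlt.1.2 ?_⟩, hAlt.2⟩, ?_⟩
          · have : x⁻¹ * (x * a) ∈ (H : Set G) := mul_mem (inv_mem hx') hmem
            simpa [mul_assoc] using this
          · rw [List.prod_cons, ← hprod, List.prod_cons]; simp [mul_assoc]
    · rcases py with hy' | ⟨j₂, v, hne₂, hAlt₂, hprod₂⟩
      · obtain ⟨w', hne', hAlt', hprod', _⟩ := absorb_right ha hne hAlt hy'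
        exact Or.inr ⟨j, w', hne', hAlt', by rw [hprod', hprod]⟩
      · obtain ⟨j', w', h, hw'Alt, hh, hprod', _⟩ := mulWord ha _ v rfl hAlt₂ w hAlt
        rcases List.eq_nil_or_concat w' with rfl | ⟨u, z, rfl⟩
        · left
          have : h = x * y := by simpa [hprod, hprod₂] using hprod'
          rw [← this]; exact hh
        · obtain ⟨w'', hne'', hAlt'', hprod'', _⟩ :=
            absorb_right ha (by simp [List.concat_eq_append]) hw'Alt hh
          exact Or.inr ⟨j', w'', hne'', hAlt'', by
            rw [hprod'', hprod', hprod, hprod₂]⟩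
  | inv x hx px =>
    rcases px with hx' | ⟨j, w, hne, hAlt, hprod⟩
    · exact Or.inl (inv_mem hx')
    · refine Or.inr ⟨j + w.length + 1, (w.map fun a => a⁻¹).reverse, by simpa using hne,
        altWord_reverse_inv hAlt, ?_⟩
      rw [← List.prod_inv_reverse, hprod]

theorem cyc_reduce (ha : IsAmalgam G₀ G₁ H) :
    ∀ (k : ℕ) (j : ℕ) (w : List G), w.length = k → w ≠ [] → AltWord G₀ G₁ H j w →
    ∃ (j' : ℕ) (v : List G) (c : G), v ≠ [] ∧ AltWord G₀ G₁ H j' v ∧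
      (v.length = 1 ∨ Even v.length) ∧ c * w.prod * c⁻¹ = v.prod := by
  intro k
  induction k using Nat.strong_induction_on with
  | _ k ih =>
    intro j w hk hne hAlt
    by_cases h1 : w.length = 1 ∨ Even w.length
    · exact ⟨j, w, 1, hne, hAlt, h1, by simp⟩
    · push_neg at h1
      have hlen3 : 3 ≤ w.length := by
        have : w.length ≠ 0 := by simpa using hne
        rcases Nat.even_or_odd w.length with he | ho
        · exact absurd he h1.2
        · obtain ⟨m, hm⟩ := ho; omega
      obtain ⟨a, t, rfl⟩ := List.exists_cons_of_ne_nil hne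
      rcases List.eq_nil_or_concat t with rfl | ⟨t', b, rfl⟩
      · simp at hlen3
      rw [List.concat_eq_append] at *
      rw [altWord_cons] at hAlt
      obtain ⟨haF, htAlt⟩ := hAlt
      obtain ⟨ht'Alt, hbF⟩ := (altWord_concat_iff _ _ _).1 htAlt
      have hL : t'.length % 2 = 1 := by
        have : (a :: (t' ++ [b])).length = t'.length + 2 := by simp
        have hodd : ¬ Even (t'.length + 2) := by rw [← this]; exact h1.2
        have := Nat.not_even_iff.1 hodd
        omega
      have hconj0 : a⁻¹ * (a :: (t' ++ [b])).prod * a⁻¹⁻¹ = t'.prod * (b * a) := by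
        rw [List.prod_cons, List.prod_append]; simp [mul_assoc]
      by_cases hba : b * a ∈ (H : Set G)
      · -- absorb and recurse
        have ht'ne : t' ≠ [] := by
          intro h; rw [h] at hL; simp at hL
        obtain ⟨t'', d, rfl⟩ := (List.eq_nil_or_concat t').resolve_left ht'ne
        rw [List.concat_eq_append] at *
        obtain ⟨ht''Alt, hdF⟩ := (altWord_concat_iff _ _ _).1 ht'Alt
        have hv₁Alt : AltWord G₀ G₁ H (j + 1) (t'' ++ [d * (b * a)]) := by
          refine (altWord_concat_iff _ _ _).2 ⟨ht''Alt,
            fac_mul hdF.1 (h_mem_fac ha hba), fun hmem => hdF.2 ?_⟩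
          have : (d * (b * a)) * (b * a)⁻¹ ∈ (H : Set G) := mul_mem hmem (inv_mem hba)
          simpa [mul_assoc] using this
        have hlt : (t'' ++ [d * (b * a)]).length < k := by
          rw [← hk]; simp
        obtain ⟨j', v, c, hvne, hvAlt, hvlen, hconj⟩ :=
          ih _ hlt (j + 1) _ rfl (by simp) hv₁Alt
        refine ⟨j', v, c * a⁻¹, hvne, hvAlt, hvlen, ?_⟩
        rw [← hconj]
        have hprod₁ : (t'' ++ [d * (b * a)]).prod = a⁻¹ * (a :: ((t'' ++ [d]) ++ [b])).prod * a⁻¹⁻¹ := by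
          rw [hconj0, List.prod_append, List.prod_append]
          simp [mul_assoc]
        rw [hprod₁]; group
      · -- merged word is cyclically reduced
        refine ⟨j + 1, t' ++ [b * a], a⁻¹, by simp, ?_, ?_, ?_⟩
        · refine (altWord_concat_iff _ _ _).2 ⟨ht'Alt, ?_, hba⟩
          refine fac_mul hbF.1 ?_
          rw [fac_congr G₀ G₁ (j := j + 1 + t'.length) (j' := j) (by omega)] at hbF ⊢
          exact haF.1
        · right
          rw [List.length_append, List.length_singleton]
          exact ⟨(t'.length + 1) / 2, by omega⟩
        · rw [hconj0, List.prod_append]; simp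

def blk (a b : G) : ℕ → List G
  | 0 => []
  | n + 1 => a :: b :: blk a b n

theorem blk_length (a b : G) (n : ℕ) : (blk a b n).length = 2 * n := by
  induction n with
  | zero => rfl
  | succ n ih => simp [blk, ih]; omega

theorem blk_prod (a b : G) (n : ℕ) : (blk a b n).prod = (a * b) ^ n := by
  induction n with
  | zero => simp [blk]
  | succ n ih => rw [blk, List.prod_cons, List.prod_cons, ih, pow_succ']; simp [mul_assoc]

theorem blk_altWord {j : ℕ} {a b : G} (hA : a ∈ Fac G₀ G₁ j \ (H : Set G))
    (hB : b ∈ Fac G₀ G₁ (j + 1) \ (H : Set G)) (n : ℕ) :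
    AltWord G₀ G₁ H j (blk a b n) := by
  induction n with
  | zero => exact altWord_nil _ _ _ _
  | succ n ih =>
    rw [blk, altWord_cons, altWord_cons]
    exact ⟨hA, hB, altWord_congr _ _ _ (by omega) ih⟩

theorem pow_shift (a b : G) (n : ℕ) : a * (b * a) ^ n = (a * b) ^ n * a := by
  induction n with
  | zero => simp
  | succ n ih =>
    rw [pow_succ, pow_succ, ← mul_assoc, ih]
    simp [mul_assoc]

theorem exists_notin (h0 : H.relIndex G₀ ≠ 1) (h1 : H.relIndex G₁ ≠ 1) (j : ℕ) :
    ∃ u, u ∈ Fac G₀ G₁ j \ (H : Set G) := by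
  unfold Fac; split
  · have : ¬ (G₀ ≤ H) := fun hle => h0 (Subgroup.relIndex_eq_one.2 hle)
    obtain ⟨x, hx, hxH⟩ := SetLike.not_le_iff_exists.1 this
    exact ⟨x, hx, hxH⟩
  · have : ¬ (G₁ ≤ H) := fun hle => h1 (Subgroup.relIndex_eq_one.2 hle)
    obtain ⟨x, hx, hxH⟩ := SetLike.not_le_iff_exists.1 this
    exact ⟨x, hx, hxH⟩

theorem exists_avoid {j : ℕ} (hr1 : H.relIndex (FacS G₀ G₁ j) ≠ 1)
    (hr2 : H.relIndex (FacS G₀ G₁ j) ≠ 2)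
    {x : G} (hx : x ∈ Fac G₀ G₁ j \ (H : Set G)) :
    ∃ z, z ∈ Fac G₀ G₁ j \ (H : Set G) ∧ x * z ∉ (H : Set G) := by
  by_contra hcon
  push_neg at hcon
  have hxK : x ∈ FacS G₀ G₁ j := by
    rw [← SetLike.mem_coe, facS_coe]; exact hx.1
  have hsurj : Function.Surjective (fun b : Bool =>
      if b then QuotientGroup.mk (s := H.subgroupOf (FacS G₀ G₁ j))
        (⟨x⁻¹, inv_mem hxK⟩ : FacS G₀ G₁ j)
      else QuotientGroup.mk (s := H.subgroupOf (FacS G₀ G₁ j)) (1 : FacS G₀ G₁ j)) := by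
    intro q
    obtain ⟨z, rfl⟩ := QuotientGroup.mk_surjective q
    by_cases hz : (z : G) ∈ (H : Set G)
    · refine ⟨false, ?_⟩
      simp only [Bool.false_eq_true, if_false]
      rw [QuotientGroup.eq]
      simpa [Subgroup.mem_subgroupOf] using hz
    · refine ⟨true, ?_⟩
      simp only [if_true]
      rw [QuotientGroup.eq]
      have hzF : (z : G) ∈ Fac G₀ G₁ j \ (H : Set G) := by
        refine ⟨?_, hz⟩
        rw [← facS_coe]; exact z.2
      have hxz := hcon (z : G) hzF
      simp only [Subgroup.mem_subgroupOf]
      simpa using hxz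
  have hfin : Finite ((FacS G₀ G₁ j) ⧸ H.subgroupOf (FacS G₀ G₁ j)) :=
    Finite.of_surjective _ hsurj
  have hle : Nat.card ((FacS G₀ G₁ j) ⧸ H.subgroupOf (FacS G₀ G₁ j)) ≤ 2 := by
    have := Nat.card_le_card_of_surjective _ hsurj
    simpa [Nat.card_eq_fintype_card] using this
  have hpos : 0 < Nat.card ((FacS G₀ G₁ j) ⧸ H.subgroupOf (FacS G₀ G₁ j)) := Nat.card_pos
  have hrel : H.relIndex (FacS G₀ G₁ j)
      = Nat.card ((FacS G₀ G₁ j) ⧸ H.subgroupOf (FacS G₀ G₁ j)) :=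
    Subgroup.index_eq_card _
  omega



theorem relindex_facS_ne_one (h0 : H.relIndex G₀ ≠ 1) (h1 : H.relIndex G₁ ≠ 1) (m : ℕ) :
    H.relIndex (FacS G₀ G₁ m) ≠ 1 := by
  unfold FacS; split <;> assumption

theorem facS_pair (G₀ G₁ : Subgroup G) (j : ℕ) :
    (FacS G₀ G₁ j = G₀ ∧ FacS G₀ G₁ (j + 1) = G₁) ∨
      (FacS G₀ G₁ j = G₁ ∧ FacS G₀ G₁ (j + 1) = G₀) := by
  unfold FacS
  rcases Nat.mod_two_eq_zero_or_one j with h | h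
  · left
    constructor <;> simp [h, Nat.add_mod]
  · right
    constructor <;> simp [h, Nat.add_mod]

theorem class_inf_even (ha : IsAmalgam G₀ G₁ H)
    (h0 : H.relIndex G₀ ≠ 1) (h1 : H.relIndex G₁ ≠ 1)
    {j : ℕ} {v : List G} (hne : v ≠ []) (hAlt : AltWord G₀ G₁ H j v)
    (heven : Even v.length)
    (hgood : H.relIndex (FacS G₀ G₁ (j + 1)) ≠ 2) :
    {x : G | ∃ y : G, y * v.prod * y⁻¹ = x}.Infinite := by
  obtain ⟨v', xk, rfl⟩ := (List.eq_nil_or_concat v).resolve_left hne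
  rw [List.concat_eq_append] at *
  obtain ⟨hv'Alt, hxk⟩ := (altWord_concat_iff _ _ _).1 hAlt
  have hodd : v'.length % 2 = 1 := by
    obtain ⟨m, hm⟩ := heven
    rw [List.length_append, List.length_singleton] at hm
    omega
  have hxk1 : xk ∈ Fac G₀ G₁ (j + 1) \ (H : Set G) := by
    rwa [fac_congr G₀ G₁ (j := j + v'.length) (j' := j + 1) (by omega)] at hxk
  obtain ⟨z₁, hz₁, hxz₁⟩ :=
    exists_avoid (relindex_facS_ne_one h0 h1 (j + 1)) hgood hxk1
  obtain ⟨z₂, hz₂⟩ := exists_notin h0 h1 j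
  have hz₂inv : z₂⁻¹ ∈ Fac G₀ G₁ j \ (H : Set G) :=
    ⟨fac_inv hz₂.1, fun h => hz₂.2 (by simpa using inv_mem (s := H) h)⟩
  have hz₁inv : z₁⁻¹ ∈ Fac G₀ G₁ (j + 1) \ (H : Set G) :=
    ⟨fac_inv hz₁.1, fun h => hz₁.2 (by simpa using inv_mem (s := H) h)⟩
  -- the words
  have haux : ∀ n : ℕ,
      AltWord G₀ G₁ H j (blk z₂⁻¹ z₁⁻¹ (n+1) ++ (v' ++ ([xk * z₁] ++ (blk z₂ z₁ n ++ [z₂])))) ∧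
      (blk z₂⁻¹ z₁⁻¹ (n+1) ++ (v' ++ ([xk * z₁] ++ (blk z₂ z₁ n ++ [z₂])))).length
        = 4 * n + v'.length + 4 ∧
      (blk z₂⁻¹ z₁⁻¹ (n+1) ++ (v' ++ ([xk * z₁] ++ (blk z₂ z₁ n ++ [z₂])))).prod
        = ((z₁ * z₂) ^ (n+1))⁻¹ * (v' ++ [xk]).prod * (((z₁ * z₂) ^ (n+1))⁻¹)⁻¹ := by
    intro n
    refine ⟨?_, ?_, ?_⟩
    · have hz₂A : z₂ ∈ Fac G₀ G₁ (j + v'.length + 1) \ (H : Set G) := by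
        rw [fac_congr G₀ G₁ (j := j + v'.length + 1) (j' := j) (by omega)]; exact hz₂
      have hz₁A : z₁ ∈ Fac G₀ G₁ (j + v'.length + 1 + 1) \ (H : Set G) := by
        rw [fac_congr G₀ G₁ (j := j + v'.length + 1 + 1) (j' := j + 1) (by omega)]; exact hz₁
      have hb3 : AltWord G₀ G₁ H (j + v'.length + 1) (blk z₂ z₁ n ++ [z₂]) := by
        refine altWord_append _ _ _ (blk_altWord hz₂A hz₁A n) ?_
        rw [blk_length]
        refine altWord_singleton _ _ _ ?_
        rw [fac_congr G₀ G₁ (j := j + v'.length + 1 + 2 * n) (j' := j) (by omega)]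
        exact hz₂
      have hb2 : AltWord G₀ G₁ H (j + v'.length) ([xk * z₁] ++ (blk z₂ z₁ n ++ [z₂])) := by
        refine (altWord_cons _ _ _).2 ⟨⟨fac_mul hxk.1 ?_, hxz₁⟩, hb3⟩
        rw [fac_congr G₀ G₁ (j := j + v'.length) (j' := j + 1) (by omega)]
        exact hz₁.1
      have hb1 : AltWord G₀ G₁ H j (v' ++ ([xk * z₁] ++ (blk z₂ z₁ n ++ [z₂]))) :=
        altWord_append _ _ _ hv'Alt hb2
      refine altWord_append _ _ _ (blk_altWord hz₂inv hz₁inv (n+1)) ?_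
      rw [blk_length]
      exact altWord_congr _ _ _ (j := j) (by omega) hb1
    · simp [blk_length, List.length_append]
      omega
    · have key : z₁ * ((z₂ * z₁) ^ n * z₂) = (z₁ * z₂) ^ (n + 1) := by
        rw [← mul_assoc, pow_shift, mul_assoc, ← pow_succ]
      simp only [List.prod_append, List.prod_cons, List.prod_nil, blk_prod, mul_one,
        List.prod_singleton]
      rw [mul_assoc xk, key, show z₂⁻¹ * z₁⁻¹ = (z₁ * z₂)⁻¹ from (mul_inv_rev z₁ z₂).symm,
        inv_pow, inv_inv]
      simp [mul_assoc]
  apply Set.infinite_of_injective_forall_mem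
    (f := fun n : ℕ =>
      (blk z₂⁻¹ z₁⁻¹ (n+1) ++ (v' ++ ([xk * z₁] ++ (blk z₂ z₁ n ++ [z₂])))).prod)
  case hi =>
    intro n m hnm
    have hl := length_eq_of_prod_eq ha (haux n).1 (haux m).1 hnm
    rw [(haux n).2.1, (haux m).2.1] at hl
    omega
  case hf =>
    intro n
    exact ⟨((z₁ * z₂) ^ (n+1))⁻¹, ((haux n).2.2).symm⟩

theorem class_infinite (ha : IsAmalgam G₀ G₁ H)
    (h0 : H.relIndex G₀ ≠ 1) (h1 : H.relIndex G₁ ≠ 1)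
    (h2 : ¬(H.relIndex G₀ = 2 ∧ H.relIndex G₁ = 2))
    {j : ℕ} {v : List G} (hne : v ≠ []) (hAlt : AltWord G₀ G₁ H j v)
    (hlen : v.length = 1 ∨ Even v.length) :
    {x : G | ∃ y : G, y * v.prod * y⁻¹ = x}.Infinite := by
  rcases hlen with hone | heven
  · -- length 1
    obtain ⟨x, rfl⟩ := List.length_eq_one_iff.1 hone
    have hx : x ∈ Fac G₀ G₁ j \ (H : Set G) := ((altWord_cons _ _ _).1 hAlt).1
    obtain ⟨u, hu⟩ := exists_notin h0 h1 j
    obtain ⟨t, ht⟩ := exists_notin h0 h1 (j + 1)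
    have htinv : t⁻¹ ∈ Fac G₀ G₁ (j + 1) \ (H : Set G) :=
      ⟨fac_inv ht.1, fun h => ht.2 (by simpa using inv_mem (s := H) h)⟩
    have huinv : u⁻¹ ∈ Fac G₀ G₁ (j + 2) \ (H : Set G) := by
      rw [fac_congr G₀ G₁ (j := j + 2) (j' := j) (by omega)]
      exact ⟨fac_inv hu.1, fun h => hu.2 (by simpa using inv_mem (s := H) h)⟩
    have haux : ∀ n : ℕ,
        AltWord G₀ G₁ H j (blk u t n ++ ([x] ++ blk t⁻¹ u⁻¹ n)) ∧
        (blk u t n ++ ([x] ++ blk t⁻¹ u⁻¹ n)).length = 4 * n + 1 ∧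
        (blk u t n ++ ([x] ++ blk t⁻¹ u⁻¹ n)).prod
          = (u * t) ^ n * [x].prod * ((u * t) ^ n)⁻¹ := by
      intro n
      refine ⟨?_, ?_, ?_⟩
      · refine altWord_append _ _ _ (blk_altWord hu ht n) ?_
        rw [blk_length]
        exact altWord_congr _ _ _ (j := j) (by omega)
          ((altWord_cons _ _ _).2 ⟨hx, blk_altWord htinv huinv n⟩)
      · simp [blk_length, List.length_append]
        omega
      · simp only [List.prod_append, List.prod_cons, List.prod_nil, blk_prod, mul_one,
          List.prod_singleton]
        rw [show t⁻¹ * u⁻¹ = (u * t)⁻¹ from (mul_inv_rev u t).symm, inv_pow]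
        simp [mul_assoc]
    apply Set.infinite_of_injective_forall_mem
      (f := fun n : ℕ => (blk u t n ++ ([x] ++ blk t⁻¹ u⁻¹ n)).prod)
    case hi =>
      intro n m hnm
      have hl := length_eq_of_prod_eq ha (haux n).1 (haux m).1 hnm
      rw [(haux n).2.1, (haux m).2.1] at hl
      omega
    case hf =>
      intro n
      exact ⟨(u * t) ^ n, ((haux n).2.2).symm⟩
  · -- even length
    by_cases hr : H.relIndex (FacS G₀ G₁ (j + 1)) = 2
    · -- rotate the word
      obtain ⟨a, t, rfl⟩ := List.exists_cons_of_ne_nil hne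
      have hodd : t.length % 2 = 1 := by
        obtain ⟨m, hm⟩ := heven
        rw [List.length_cons] at hm
        omega
      rw [altWord_cons] at hAlt
      have hAlt₂ : AltWord G₀ G₁ H (j + 1) (t ++ [a]) := by
        refine (altWord_concat_iff _ _ _).2 ⟨hAlt.2, ?_, hAlt.1.2⟩
        rw [fac_congr G₀ G₁ (j := j + 1 + t.length) (j' := j) (by omega)]
        exact hAlt.1.1
      have heven₂ : Even (t ++ [a]).length := by
        rw [List.length_append, List.length_singleton]
        exact ⟨(t.length + 1) / 2, by omega⟩
      have hgood₂ : H.relIndex (FacS G₀ G₁ (j + 1 + 1)) ≠ 2 := by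
        rw [facS_congr G₀ G₁ (j := j + 1 + 1) (j' := j) (by omega)]
        intro hcon
        rcases facS_pair G₀ G₁ j with ⟨e0, e1⟩ | ⟨e0, e1⟩
        · rw [e0] at hcon; rw [e1] at hr; exact h2 ⟨hcon, hr⟩
        · rw [e0] at hcon; rw [e1] at hr; exact h2 ⟨hr, hcon⟩
      have hinf₂ := class_inf_even ha h0 h1 (by simp) hAlt₂ heven₂ hgood₂
      refine hinf₂.mono ?_
      rintro z ⟨y, rfl⟩
      refine ⟨y * a⁻¹, ?_⟩
      rw [List.prod_append, List.prod_singleton, List.prod_cons]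
      group
    · exact class_inf_even ha h0 h1 hne hAlt heven hr

end FCAux

/-- Let `G = G₀ *_H G₁` be a nondegenerate free product with amalgamation and assume that
`H` is finite. Then `FC(G) = ker G`: the set of elements of `G` with finite conjugacy
class coincides with `⋂_{g ∈ G} g H g⁻¹`. -/
theorem fc_eq_ker_of_finite {G : Type*} [Group G] (G₀ G₁ H : Subgroup G)
    (ha : IsAmalgam G₀ G₁ H) (hnd : Nondegenerate G₀ G₁ H)
    (hfin : (H : Set G).Finite) :
    {g : G | {x : G | ∃ y : G, y * g * y⁻¹ = x}.Finite} = amalgamKerSet H := by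
  ext x
  simp only [Set.mem_setOf_eq]
  constructor
  · intro hfc
    simp only [amalgamKerSet, Set.mem_iInter, Set.mem_setOf_eq]
    intro g
    by_contra hg
    obtain (hmem | ⟨j, w, hne, hAlt, hprod⟩) := FCAux.exists_rep ha (g⁻¹ * x * g)
    · exact hg hmem
    obtain ⟨j', v, c, hvne, hvAlt, hvlen, hconj⟩ :=
      FCAux.cyc_reduce ha w.length j w rfl hne hAlt
    have hinf := FCAux.class_infinite ha hnd.1 hnd.2.1 hnd.2.2 hvne hvAlt hvlen
    have hsub : {z : G | ∃ y : G, y * v.prod * y⁻¹ = z}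
        ⊆ {z : G | ∃ y : G, y * x * y⁻¹ = z} := by
      rintro z ⟨y, rfl⟩
      refine ⟨y * c * g⁻¹, ?_⟩
      rw [← hconj, hprod]
      group
    exact hinf (hfc.subset hsub)
  · intro hker
    apply hfin.subset
    rintro z ⟨y, rfl⟩
    simp only [amalgamKerSet, Set.mem_iInter, Set.mem_setOf_eq] at hker
    have := hker y⁻¹
    simpa using this
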